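/- arXiv:1602.07033 — 7 statements merged into one kernel-verified Lean document; each statement's English description precedes it below -/
import Mathlib

section
/- Assume the necessary condition ∫_0^x̄ (q(x)/g(x))·exp(−∫_0^x μ(s)/g(s) ds) dx = 1 holds. Define u_*(x) = (1/g(x))·exp(−∫_0^x μ(s)/g(s) ds) for x ∈ [0, x̄]. Then u_* is a strictly positive stationary solution of the Sinko–Streifer model on [0, x̄]: u_* is continuous and strictly positive on [0, x̄], the function x ↦ g(x)·u_*(x) is differentiable on [0, x̄] with (g·u_*)'(x) + μ(x)·u_*(x) = 0 for all x ∈ [0, x̄], and g(0)·u_*(0) = ∫_0^x̄ q(y)·u_*(y) dy. -/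
open MeasureTheory intervalIntegral

/-- If the necessary condition holds, then
`u_*(x) = (1/g(x)) * exp(-∫_0^x μ/g)` is a strictly positive stationary solution of
the Sinko–Streifer model on `[0, x̄]`. -/
theorem sinko_streifer_stationary_solution_exists
    (xbar : ℝ) (hxbar : 0 < xbar) (g μ q : ℝ → ℝ)
    (hg : ContinuousOn g (Set.Icc 0 xbar))
    (hμ : ContinuousOn μ (Set.Icc 0 xbar))
    (hq : ContinuousOn q (Set.Icc 0 xbar))
    (hgpos : ∀ x ∈ Set.Icc (0:ℝ) xbar, 0 < g x)
    (hμnn : ∀ x ∈ Set.Icc (0:ℝ) xbar, 0 ≤ μ x)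
    (hqnn : ∀ x ∈ Set.Icc (0:ℝ) xbar, 0 ≤ q x)
    (hnec : (∫ x in (0:ℝ)..xbar,
        (q x / g x) * Real.exp (-(∫ s in (0:ℝ)..x, μ s / g s))) = 1)
    (u : ℝ → ℝ)
    (hu : ∀ x, u x = (1 / g x) * Real.exp (-(∫ s in (0:ℝ)..x, μ s / g s))) :
    ContinuousOn u (Set.Icc 0 xbar) ∧
    (∀ x ∈ Set.Icc (0:ℝ) xbar, 0 < u x) ∧
    (∀ x ∈ Set.Icc (0:ℝ) xbar,
      HasDerivWithinAt (fun y => g y * u y) (-(μ x * u x)) (Set.Icc 0 xbar) x) ∧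
    g 0 * u 0 = ∫ y in (0:ℝ)..xbar, q y * u y := by
  set f : ℝ → ℝ := fun s => μ s / g s with hf
  set F : ℝ → ℝ := fun x => ∫ s in (0:ℝ)..x, f s with hF
  have hgne : ∀ x ∈ Set.Icc (0:ℝ) xbar, g x ≠ 0 := fun x hx => (hgpos x hx).ne'
  have hfcont : ContinuousOn f (Set.Icc 0 xbar) := hμ.div hg hgne
  have hFderiv : ∀ x ∈ Set.Icc (0:ℝ) xbar,
      HasDerivWithinAt F (f x) (Set.Icc 0 xbar) x := by
    intro x hx
    have hint : IntervalIntegrable f volume 0 x := by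
      apply ContinuousOn.intervalIntegrable
      apply hfcont.mono
      rw [Set.uIcc_of_le hx.1]
      exact Set.Icc_subset_Icc le_rfl hx.2
    rcases hx.1.eq_or_lt with h0 | h0
    · subst h0
      have hmem : Set.Icc (0:ℝ) xbar ∈ nhdsWithin (0:ℝ) (Set.Ioi 0) :=
        Icc_mem_nhdsGT_of_mem ⟨le_rfl, hxbar⟩
      have hmeas : StronglyMeasurableAtFilter f (nhdsWithin 0 (Set.Ioi 0)) volume :=
        ⟨Set.Icc 0 xbar, hmem, hfcont.aestronglyMeasurable measurableSet_Icc⟩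
      have hcw : ContinuousWithinAt f (Set.Ioi 0) 0 :=
        (hfcont 0 ⟨le_rfl, hxbar.le⟩).mono_of_mem_nhdsWithin hmem
      exact (intervalIntegral.integral_hasDerivWithinAt_right hint hmeas hcw).mono
        Set.Icc_subset_Ici_self
    · rcases hx.2.eq_or_lt with h1 | h1
      · subst h1
        have hmem : Set.Icc (0:ℝ) x ∈ nhdsWithin x (Set.Iic x) :=
          Icc_mem_nhdsLE_of_mem ⟨h0, le_rfl⟩
        have hmeas : StronglyMeasurableAtFilter f (nhdsWithin x (Set.Iic x)) volume :=
          ⟨Set.Icc 0 x, hmem, hfcont.aestronglyMeasurable measurableSet_Icc⟩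
        have hcw : ContinuousWithinAt f (Set.Iic x) x :=
          (hfcont x ⟨h0.le, le_rfl⟩).mono_of_mem_nhdsWithin hmem
        exact (intervalIntegral.integral_hasDerivWithinAt_right hint hmeas hcw).mono
          Set.Icc_subset_Iic_self
      · have hmem : Set.Icc (0:ℝ) xbar ∈ nhds x := Icc_mem_nhds h0 h1
        have hmeas : StronglyMeasurableAtFilter f (nhds x) volume :=
          ⟨Set.Icc 0 xbar, hmem, hfcont.aestronglyMeasurable measurableSet_Icc⟩
        have hca : ContinuousAt f x := hfcont.continuousAt hmem
        exact (intervalIntegral.integral_hasDerivAt_right hint hmeas hca).hasDerivWithinAt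
  have hFcont : ContinuousOn F (Set.Icc 0 xbar) :=
    fun x hx => (hFderiv x hx).continuousWithinAt
  have hEcont : ContinuousOn (fun x => Real.exp (-(F x))) (Set.Icc 0 xbar) :=
    Real.continuous_exp.comp_continuousOn hFcont.neg
  refine ⟨?_, ?_, ?_, ?_⟩
  · have : ContinuousOn (fun x => (1 / g x) * Real.exp (-(F x))) (Set.Icc 0 xbar) :=
      (continuousOn_const.div hg hgne).mul hEcont
    exact this.congr fun x _ => hu x
  · intro x hx
    rw [hu x]
    exact mul_pos (one_div_pos.mpr (hgpos x hx)) (Real.exp_pos _)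
  · intro x hx
    have hE : HasDerivWithinAt (fun y => Real.exp (-(F y)))
        (Real.exp (-(F x)) * (-(f x))) (Set.Icc 0 xbar) x :=
      ((hFderiv x hx).neg).exp
    have heq : ∀ y ∈ Set.Icc (0:ℝ) xbar, g y * u y = Real.exp (-(F y)) := by
      intro y hy
      rw [hu y, ← mul_assoc, mul_one_div, div_self (hgne y hy), one_mul]
    have hder : -(μ x * u x) = Real.exp (-(F x)) * (-(f x)) := by
      rw [hu x, hf]
      ring
    rw [hder]
    exact hE.congr heq (heq x hx)
  · have hptw : ∀ y, q y * u y = (q y / g y) * Real.exp (-(∫ s in (0:ℝ)..y, μ s / g s)) := by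
      intro y
      rw [hu y]
      ring
    rw [intervalIntegral.integral_congr (g := fun y =>
      (q y / g y) * Real.exp (-(∫ s in (0:ℝ)..y, μ s / g s))) (fun y _ => hptw y), hnec,
      hu 0, intervalIntegral.integral_same, neg_zero, Real.exp_zero, mul_one, mul_one_div,
      div_self (hgne 0 ⟨le_rfl, hxbar.le⟩)]
end

section
/- If u_* is a stationary solution of the Sinko–Streifer model on [0, x̄] with ∫_0^x̄ q(y)·u_*(y) dy ≠ 0, then the necessary condition ∫_0^x̄ (q(x)/g(x))·exp(−∫_0^x μ(s)/g(s) ds) dx = 1 holds. -/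
open MeasureTheory intervalIntegral

/-- A stationary solution of the Sinko–Streifer model on `[0, x̄]`. -/
def IsSinkoStationary (xbar : ℝ) (g μ q u : ℝ → ℝ) : Prop :=
  ContinuousOn u (Set.Icc 0 xbar) ∧
  (∀ x ∈ Set.Icc (0:ℝ) xbar,
    HasDerivWithinAt (fun y => g y * u y) (-(μ x * u x)) (Set.Icc 0 xbar) x) ∧
  g 0 * u 0 = ∫ y in (0:ℝ)..xbar, q y * u y

/-- If a stationary solution of the Sinko–Streifer model has nonzero renewal integral,
then the necessary condition (eq. (8) of the paper) holds. -/
theorem sinko_streifer_necessary_condition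
    (xbar : ℝ) (hxbar : 0 < xbar) (g μ q : ℝ → ℝ)
    (hg : ContinuousOn g (Set.Icc 0 xbar))
    (hμ : ContinuousOn μ (Set.Icc 0 xbar))
    (hq : ContinuousOn q (Set.Icc 0 xbar))
    (hgpos : ∀ x ∈ Set.Icc (0:ℝ) xbar, 0 < g x)
    (hμnn : ∀ x ∈ Set.Icc (0:ℝ) xbar, 0 ≤ μ x)
    (hqnn : ∀ x ∈ Set.Icc (0:ℝ) xbar, 0 ≤ q x)
    (u : ℝ → ℝ) (hu : IsSinkoStationary xbar g μ q u)
    (hne : (∫ y in (0:ℝ)..xbar, q y * u y) ≠ 0) :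
    (∫ x in (0:ℝ)..xbar,
      (q x / g x) * Real.exp (-(∫ s in (0:ℝ)..x, μ s / g s))) = 1 := by
  obtain ⟨hucont, hODE, hbc⟩ := hu
  -- extend μ/g to a continuous function h on ℝ
  have hμg : ContinuousOn (fun s => μ s / g s) (Set.Icc 0 xbar) :=
    hμ.div hg (fun x hx => (hgpos x hx).ne')
  obtain ⟨h, hhcont, hEq⟩ : ∃ h : ℝ → ℝ, Continuous h ∧
      Set.EqOn (fun s => μ s / g s) h (Set.Icc 0 xbar) := by
    obtain ⟨h, hh⟩ := ContinuousMap.exists_restrict_eq (Y := ℝ)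
      (isClosed_Icc (a := (0:ℝ)) (b := xbar))
      ⟨_, continuousOn_iff_continuous_restrict.mp hμg⟩
    exact ⟨h, h.continuous, fun x hx => (ContinuousMap.congr_fun hh ⟨x, hx⟩).symm⟩
  set F : ℝ → ℝ := fun x => ∫ s in (0:ℝ)..x, h s with hF
  have hFderiv : ∀ x : ℝ, HasDerivAt F (h x) x := fun x =>
    (hhcont.integral_hasStrictDerivAt 0 x).hasDerivAt
  -- F agrees with ∫ μ/g on Icc
  have hFeq : ∀ x ∈ Set.Icc (0:ℝ) xbar,
      (∫ s in (0:ℝ)..x, μ s / g s) = F x := by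
    intro x hx
    refine intervalIntegral.integral_congr ?_
    intro s hs
    rw [Set.uIcc_of_le hx.1] at hs
    exact hEq ⟨hs.1, hs.2.trans hx.2⟩
  -- the function g*u*exp(F) has zero derivative on Icc
  set Φ : ℝ → ℝ := fun x => g x * u x * Real.exp (F x) with hΦdef
  have hΦderiv : ∀ x ∈ Set.Icc (0:ℝ) xbar,
      HasDerivWithinAt Φ 0 (Set.Icc 0 xbar) x := by
    intro x hx
    have hexp : HasDerivWithinAt (fun y => Real.exp (F y))
        (Real.exp (F x) * h x) (Set.Icc 0 xbar) x :=
      ((hFderiv x).exp.hasDerivWithinAt)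
    have := (hODE x hx).mul hexp
    have hzero : -(μ x * u x) * Real.exp (F x)
        + g x * u x * (Real.exp (F x) * h x) = 0 := by
      rw [← hEq hx]
      have hgne : g x ≠ 0 := (hgpos x hx).ne'
      field_simp
      ring
    rwa [hzero] at this
  -- hence constant on Icc
  have hconst : ∀ x ∈ Set.Icc (0:ℝ) xbar, Φ x = g 0 * u 0 := by
    intro x hx
    have h0 : (0:ℝ) ∈ Set.Icc (0:ℝ) xbar := ⟨le_refl 0, hxbar.le⟩
    have := (convex_Icc (0:ℝ) xbar).is_const_of_fderivWithin_eq_zero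
      (𝕜 := ℝ) (f := Φ)
      (fun y hy => (hΦderiv y hy).differentiableWithinAt)
      (fun y hy => by
        rw [(hΦderiv y hy).hasFDerivWithinAt.fderivWithin
          (uniqueDiffOn_Icc hxbar y hy)]
        ext z
        simp) hx h0
    have hF0 : F 0 = 0 := by simp [hF]
    simpa [Φ, hF0] using this
  set c : ℝ := g 0 * u 0 with hc
  -- formula for u
  have hu_formula : ∀ x ∈ Set.Icc (0:ℝ) xbar,
      q x * u x = c * ((q x / g x) * Real.exp (-(∫ s in (0:ℝ)..x, μ s / g s))) := by
    intro x hx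
    have hgne : g x ≠ 0 := (hgpos x hx).ne'
    have h1 : g x * u x * Real.exp (F x) = c := hconst x hx
    have h2 : u x = c * Real.exp (-F x) / g x := by
      have hexpne : Real.exp (F x) ≠ 0 := Real.exp_ne_zero _
      field_simp [Real.exp_neg] at h1 ⊢
      rw [← h1, Real.exp_neg, mul_assoc, mul_inv_cancel₀ hexpne, mul_one]
    rw [hFeq x hx, h2]
    field_simp [Real.exp_neg]
  have hint : (∫ y in (0:ℝ)..xbar, q y * u y)
      = c * ∫ x in (0:ℝ)..xbar,
          (q x / g x) * Real.exp (-(∫ s in (0:ℝ)..x, μ s / g s)) := by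
    rw [← intervalIntegral.integral_const_mul]
    refine intervalIntegral.integral_congr ?_
    intro x hx
    rw [Set.uIcc_of_le hxbar.le] at hx
    exact hu_formula x hx
  have hcne : c ≠ 0 := by rw [hbc]; exact hne
  have : c = c * ∫ x in (0:ℝ)..xbar,
      (q x / g x) * Real.exp (-(∫ s in (0:ℝ)..x, μ s / g s)) := by
    rw [← hint]; exact hbc
  have h1 : c * 1 = c * ∫ x in (0:ℝ)..xbar,
      (q x / g x) * Real.exp (-(∫ s in (0:ℝ)..x, μ s / g s)) := by
    rw [mul_one]; exact this
  exact (mul_left_cancel₀ hcne h1).symm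
end

section
/- Assume g(x_i) ≥ 0, q(x_i) ≥ 0, and q(x_i) < μ(x_i) for all i ∈ {1, …, n}. Then every complex eigenvalue of G_n has strictly negative real part. -/
open scoped BigOperators

/-- Grid points `x_i = i·Δx`, `i = 1, …, n` (0-based index `i : Fin n` corresponds to
the 1-based index `i+1`), where `Δx = x̄/n`. -/
noncomputable def gridX (xbar : ℝ) (n : ℕ) (i : Fin n) : ℝ := ((i : ℕ) + 1) * (xbar / n)

/-- The `n×n` Trotter–Kato (Galerkin) approximation `G_n` of the infinitesimal
generator of the Sinko–Streifer model (eq. (12) of the paper). -/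
noncomputable def sinkoG (xbar : ℝ) (n : ℕ) (g μ q : ℝ → ℝ) : Matrix (Fin n) (Fin n) ℝ :=
  fun i j =>
    let Δx := xbar / n
    let x := gridX xbar n
    if i = j then
      (if (i : ℕ) = 0 then -(g (x i)) / Δx - μ (x i) + q (x i)
       else -(g (x i)) / Δx - μ (x i))
    else if (i : ℕ) = 0 then q (x j)
    else if (i : ℕ) = (j : ℕ) + 1 then g (x j) / Δx
    else 0

open Matrix Module.End in
/-- If `q(x_i) < μ(x_i)` at every grid point, then every complex eigenvalue of the
approximate Sinko–Streifer generator `G_n` has strictly negative real part. -/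
theorem sinkoG_eigenvalues_negative
    (xbar : ℝ) (hxbar : 0 < xbar) (n : ℕ) (hn : 1 ≤ n) (g μ q : ℝ → ℝ)
    (hg : ∀ i : Fin n, 0 ≤ g (gridX xbar n i))
    (hq : ∀ i : Fin n, 0 ≤ q (gridX xbar n i))
    (hqμ : ∀ i : Fin n, q (gridX xbar n i) < μ (gridX xbar n i))
    (lam : ℂ)
    (hlam : lam ∈ spectrum ℂ ((sinkoG xbar n g μ q).map Complex.ofReal)) :
    lam.re < 0 := by
  classical
  set A : Matrix (Fin n) (Fin n) ℂ := (sinkoG xbar n g μ q).map Complex.ofReal with hAdef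
  have hn0 : 0 < n := hn
  have hΔx : 0 < xbar / n := div_pos hxbar (by exact_mod_cast hn0)
  -- lam is in the spectrum of the transpose
  have htrans : lam ∈ spectrum ℂ Aᵀ := by
    rw [spectrum.mem_iff] at hlam ⊢
    intro hU; apply hlam
    rw [Matrix.isUnit_iff_isUnit_det] at hU ⊢
    have hdet : (algebraMap ℂ (Matrix (Fin n) (Fin n) ℂ) lam - Aᵀ).det
        = (algebraMap ℂ (Matrix (Fin n) (Fin n) ℂ) lam - A).det := by
      rw [← Matrix.det_transpose (algebraMap ℂ (Matrix (Fin n) (Fin n) ℂ) lam - A),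
        Matrix.transpose_sub]
      congr 2
      rw [Algebra.algebraMap_eq_smul_one, Matrix.transpose_smul, Matrix.transpose_one]
    rw [← hdet]; exact hU
  -- lam is an eigenvalue of the linear map induced by the transpose
  have heig : Module.End.HasEigenvalue (Matrix.toLin' Aᵀ) lam := by
    rw [Module.End.hasEigenvalue_iff_mem_spectrum, ← Matrix.toLin_eq_toLin']
    rw [show Matrix.toLin (Pi.basisFun ℂ (Fin n)) (Pi.basisFun ℂ (Fin n)) Aᵀ
        = Matrix.toLinAlgEquiv (Pi.basisFun ℂ (Fin n)) Aᵀ from rfl]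
    rw [AlgEquiv.spectrum_eq (Matrix.toLinAlgEquiv (Pi.basisFun ℂ (Fin n)))]
    exact htrans
  obtain ⟨k, hk⟩ := eigenvalue_mem_ball heig
  rw [Metric.mem_closedBall, dist_eq_norm] at hk
  -- notation
  set xk : ℝ := gridX xbar n k with hxk
  set gk : ℝ := g xk
  set qk : ℝ := q xk
  set μk : ℝ := μ xk
  have hgk : 0 ≤ gk := hg k
  have hqk : 0 ≤ qk := hq k
  have hqμk : qk < μk := hqμ k
  set qv : ℝ := if (k : ℕ) = 0 then 0 else qk with hqv
  have hqv0 : 0 ≤ qv := by rw [hqv]; split <;> simp [hqk]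
  set j0 : Fin n := ⟨0, hn0⟩ with hj0
  set jg : Fin n := if h : (k : ℕ) + 1 < n then ⟨(k : ℕ) + 1, h⟩ else k with hjg
  have hif1 : ∀ j : Fin n, (0:ℝ) ≤ if j = j0 then qv else 0 := by
    intro j; split
    · exact hqv0
    · exact le_rfl
  have hif2 : ∀ j : Fin n, (0:ℝ) ≤ if j = jg then gk / (xbar / n) else 0 := by
    intro j; split
    · exact div_nonneg hgk hΔx.le
    · exact le_rfl
  -- pointwise bound on the off-diagonal entries of column k
  have hbound : ∀ j ∈ Finset.univ.erase k, ‖Aᵀ k j‖ ≤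
      (if j = j0 then qv else 0) + (if j = jg then gk / (xbar / n) else 0) := by
    intro j hj
    have hjk : j ≠ k := Finset.ne_of_mem_erase hj
    have hAjk : Aᵀ k j = ((if (j : ℕ) = 0 then qk
        else if (j : ℕ) = (k : ℕ) + 1 then gk / (xbar / n) else 0 : ℝ) : ℂ) := by
      simp only [Matrix.transpose_apply, hAdef, Matrix.map_apply, sinkoG, if_neg hjk]
      rfl
    rw [hAjk, Complex.norm_real, Real.norm_eq_abs]
    by_cases h1 : (j : ℕ) = 0
    · have hkne : (k : ℕ) ≠ 0 := by
        intro hk0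
        exact hjk (Fin.ext (by omega))
      have hjj0 : j = j0 := Fin.ext (by simpa using h1)
      rw [if_pos h1, if_pos hjj0, abs_of_nonneg hqk]
      have hqvq : qv = qk := by rw [hqv, if_neg hkne]
      rw [hqvq]
      have := hif2 j
      linarith
    · rw [if_neg h1]
      by_cases h2 : (j : ℕ) = (k : ℕ) + 1
      · have hlt : (k : ℕ) + 1 < n := h2 ▸ j.isLt
        have hjjg : j = jg := by
          rw [hjg, dif_pos hlt]
          exact Fin.ext (by simpa using h2)
        rw [if_pos h2, if_pos hjjg, abs_of_nonneg (div_nonneg hgk hΔx.le)]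
        have := hif1 j
        linarith
      · rw [if_neg h2]
        simp only [abs_zero]
        have := hif1 j
        have := hif2 j
        linarith
  -- bound the Gershgorin radius
  have hrad : (∑ j ∈ Finset.univ.erase k, ‖Aᵀ k j‖) ≤ qv + gk / (xbar / n) := by
    calc (∑ j ∈ Finset.univ.erase k, ‖Aᵀ k j‖)
        ≤ ∑ j ∈ Finset.univ.erase k,
            ((if j = j0 then qv else 0) + (if j = jg then gk / (xbar / n) else 0)) :=
          Finset.sum_le_sum hbound
      _ ≤ ∑ j : Fin n,
            ((if j = j0 then qv else 0) + (if j = jg then gk / (xbar / n) else 0)) := by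
          apply Finset.sum_le_sum_of_subset_of_nonneg (Finset.erase_subset _ _)
          intro j _ _
          have := hif1 j
          have := hif2 j
          linarith
      _ = qv + gk / (xbar / n) := by
          rw [Finset.sum_add_distrib, Finset.sum_ite_eq' Finset.univ j0 (fun _ => qv),
            Finset.sum_ite_eq' Finset.univ jg (fun _ => gk / (xbar / n))]
          simp
  -- the real part estimate
  have hre : lam.re - (Aᵀ k k).re ≤ ‖lam - Aᵀ k k‖ := by
    have := Complex.abs_re_le_norm (lam - Aᵀ k k)
    rw [Complex.sub_re] at this
    calc lam.re - (Aᵀ k k).re ≤ |lam.re - (Aᵀ k k).re| := le_abs_self _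
      _ ≤ ‖lam - Aᵀ k k‖ := by exact this
  have hdiag : (Aᵀ k k).re = (if (k : ℕ) = 0 then -gk / (xbar / n) - μk + qk
      else -gk / (xbar / n) - μk) := by
    have hent : Aᵀ k k = ((if (k : ℕ) = 0 then -gk / (xbar / n) - μk + qk
        else -gk / (xbar / n) - μk : ℝ) : ℂ) := by
      simp only [Matrix.transpose_apply, hAdef, Matrix.map_apply, sinkoG, if_pos rfl]
      split_ifs <;> simp [neg_div] <;> rfl
    rw [hent, Complex.ofReal_re]
  have hfinal : lam.re ≤ (Aᵀ k k).re + (qv + gk / (xbar / n)) := by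
    have := le_trans hre (le_trans hk hrad)
    linarith
  rw [hdiag] at hfinal
  by_cases hk0 : (k : ℕ) = 0
  · rw [if_pos hk0] at hfinal
    rw [hqv, if_pos hk0] at hfinal
    have : -gk / (xbar / n) = -(gk / (xbar / n)) := by ring
    rw [this] at hfinal
    linarith
  · rw [if_neg hk0] at hfinal
    rw [hqv, if_neg hk0] at hfinal
    have : -gk / (xbar / n) = -(gk / (xbar / n)) := by ring
    rw [this] at hfinal
    linarith
end

section
/- Assume α_i ≥ 0, g(x_i) ≥ 0, q(x_i) ≥ 0, k_f(x_i) ≥ 0, k_a(x_i, x_j) ≥ 0, and Γ(x_i, x_j) ≥ 0 for all i, j ∈ {1, …, n}. Then for every complex eigenvalue λ of J_F(α) there exists i ∈ {1, …, n} such that |λ − (J_F(α))_{i,i}| ≤ g(x_i)/Δx + q(x_i) + Σ_{j=1}^{i−1} Γ(x_j, x_i)·k_f(x_i)·Δx + Σ_{j=1}^{n−i} α_j·k_a(x_j, x_i)·Δx + Σ_{j=1, j≠i}^{n−i} α_j·k_a(x_i, x_j)·Δx. -/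
open scoped BigOperators
open Matrix

/-- The Jacobian `J_A(α)` of the discretized aggregation operator.  In 1-based
notation, `(J_A(α))_{i,j}` is the sum of `−α_i·k_a(x_i,x_j)·Δx` (if `i+j ≤ n`),
`−Σ_{m=1}^{n−i} k_a(x_i,x_m)·α_m·Δx` (if `i = j`), and
`α_{i−j}·k_a(x_j,x_{i−j})·Δx` (if `i > j`). -/
noncomputable def flocJA (xbar : ℝ) (n : ℕ) (ka : ℝ → ℝ → ℝ) (α : Fin n → ℝ) :
    Matrix (Fin n) (Fin n) ℝ :=
  fun i j =>
    let Δx := xbar / n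
    let x := gridX xbar n
    (if (i : ℕ) + (j : ℕ) + 2 ≤ n then -(α i) * ka (x i) (x j) * Δx else 0)
    + (if i = j then
        -(∑ m : Fin n, if (m : ℕ) + (i : ℕ) + 2 ≤ n then ka (x i) (x m) * α m * Δx else 0)
       else 0)
    + (if _h : (j : ℕ) < (i : ℕ) then
        α ⟨(i : ℕ) - (j : ℕ) - 1,
            Nat.lt_of_le_of_lt ((Nat.sub_le _ _).trans (Nat.sub_le _ _)) i.isLt⟩ *
          ka (x j)
            (x ⟨(i : ℕ) - (j : ℕ) - 1,
              Nat.lt_of_le_of_lt ((Nat.sub_le _ _).trans (Nat.sub_le _ _)) i.isLt⟩) * Δx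
       else 0)

/-- The Jacobian `J_B` of the discretized breakage operator:
`(J_B)_{i,i} = −k_f(x_i)/2`, `(J_B)_{i,j} = Γ(x_i,x_j)·k_f(x_j)·Δx` for `j > i`,
and `0` below the diagonal. -/
noncomputable def flocJB (xbar : ℝ) (n : ℕ) (kf : ℝ → ℝ) (Γ : ℝ → ℝ → ℝ) :
    Matrix (Fin n) (Fin n) ℝ :=
  fun i j =>
    let Δx := xbar / n
    let x := gridX xbar n
    if i = j then -(kf (x i)) / 2
    else if (i : ℕ) < (j : ℕ) then Γ (x i) (x j) * kf (x j) * Δx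
    else 0

/-- The approximate Jacobian `J_F(α) = G_n + J_A(α) + J_B` of the discretized
population balance (microbial flocculation) equation (eq. (23)). -/
noncomputable def flocJF (xbar : ℝ) (n : ℕ) (g μ q kf : ℝ → ℝ)
    (ka : ℝ → ℝ → ℝ) (Γ : ℝ → ℝ → ℝ) (α : Fin n → ℝ) : Matrix (Fin n) (Fin n) ℝ :=
  sinkoG xbar n g μ q + flocJA xbar n ka α + flocJB xbar n kf Γ

lemma spectrum_transpose_mem {n : ℕ} (B : Matrix (Fin n) (Fin n) ℂ) {lam : ℂ}
    (h : lam ∈ spectrum ℂ B) : lam ∈ spectrum ℂ Bᵀ := by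
  rw [spectrum.mem_iff, Matrix.isUnit_iff_isUnit_det] at h ⊢
  have : algebraMap ℂ (Matrix (Fin n) (Fin n) ℂ) lam - Bᵀ
      = (algebraMap ℂ (Matrix (Fin n) (Fin n) ℂ) lam - B)ᵀ := by
    rw [Matrix.transpose_sub, Algebra.algebraMap_eq_smul_one, Matrix.transpose_smul,
      Matrix.transpose_one]
  rwa [this, Matrix.det_transpose]

lemma gersh {n : ℕ} (B : Matrix (Fin n) (Fin n) ℂ) {lam : ℂ}
    (h : lam ∈ spectrum ℂ B) :
    ∃ k, ‖lam - B k k‖ ≤ ∑ j ∈ Finset.univ.erase k, ‖B j k‖ := by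
  have h2 : lam ∈ spectrum ℂ (Matrix.toLinAlgEquiv' Bᵀ) := by
    rw [AlgEquiv.spectrum_eq]
    exact spectrum_transpose_mem B h
  have h3 : Module.End.HasEigenvalue (Matrix.toLin' Bᵀ) lam := by
    have : Matrix.toLin' Bᵀ = Matrix.toLinAlgEquiv' Bᵀ := rfl
    rw [this]
    exact Module.End.hasEigenvalue_iff_mem_spectrum.mpr h2
  obtain ⟨k, hk⟩ := eigenvalue_mem_ball h3
  refine ⟨k, ?_⟩
  rw [Metric.mem_closedBall, Complex.dist_eq] at hk
  simpa [Matrix.transpose_apply] using hk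

lemma sum_ite_val_le {n : ℕ} {c : ℝ} (hc : 0 ≤ c) (k : ℕ) :
    ∑ j : Fin n, (if (j : ℕ) = k then c else 0) ≤ c := by
  by_cases h : k < n
  · have : ∀ j : Fin n, ((j : ℕ) = k) ↔ j = ⟨k, h⟩ := by
      intro j; constructor
      · intro hj; exact Fin.ext hj
      · intro hj; rw [hj]
    simp only [this]
    rw [Finset.sum_ite_eq' Finset.univ (⟨k, h⟩ : Fin n) (fun _ => c)]
    simp
  · have : ∀ j : Fin n, ¬((j : ℕ) = k) := fun j hj => h (hj ▸ j.isLt)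
    simp [this, hc]

lemma sum_reindex {n : ℕ} (i : Fin n) (F : ℕ → ℝ) :
    ∑ j : Fin n, (if (i : ℕ) < (j : ℕ) then F ((j : ℕ) - (i : ℕ) - 1) else 0)
      = ∑ m : Fin n, (if (m : ℕ) + (i : ℕ) + 2 ≤ n then F (m : ℕ) else 0) := by
  rw [← Finset.sum_filter, ← Finset.sum_filter]
  refine Finset.sum_nbij'
    (i := fun a => (⟨(a : ℕ) - (i : ℕ) - 1, by have := a.isLt; omega⟩ : Fin n))
    (j := fun b => if h : (b : ℕ) + (i : ℕ) + 2 ≤ n then (⟨(b : ℕ) + (i : ℕ) + 1, by omega⟩ : Fin n) else b)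
    ?_ ?_ ?_ ?_ ?_
  · intro a ha
    simp only [Finset.mem_filter, Finset.mem_univ, true_and] at ha ⊢
    have := a.isLt; omega
  · intro b hb
    simp only [Finset.mem_filter, Finset.mem_univ, true_and] at hb ⊢
    rw [dif_pos hb]
    simp only [Fin.mk_lt_mk]
    omega
  · intro a ha
    simp only [Finset.mem_filter, Finset.mem_univ, true_and] at ha
    have h1 : ((a : ℕ) - (i : ℕ) - 1) + (i : ℕ) + 2 ≤ n := by have := a.isLt; omega
    simp only [h1, dif_pos]
    apply Fin.ext; simp; omega
  · intro b hb
    simp only [Finset.mem_filter, Finset.mem_univ, true_and] at hb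
    simp only [dif_pos hb]
    apply Fin.ext; simp; omega
  · intro a ha; rfl

lemma colsum_le
    (xbar : ℝ) (hxbar : 0 < xbar) (n : ℕ) (hn : 1 ≤ n)
    (g μ q kf : ℝ → ℝ) (ka : ℝ → ℝ → ℝ) (Γ : ℝ → ℝ → ℝ) (α : Fin n → ℝ)
    (hα : ∀ i : Fin n, 0 ≤ α i)
    (hg : ∀ i : Fin n, 0 ≤ g (gridX xbar n i))
    (hq : ∀ i : Fin n, 0 ≤ q (gridX xbar n i))
    (hkf : ∀ i : Fin n, 0 ≤ kf (gridX xbar n i))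
    (hka : ∀ i j : Fin n, 0 ≤ ka (gridX xbar n i) (gridX xbar n j))
    (hΓ : ∀ i j : Fin n, 0 ≤ Γ (gridX xbar n i) (gridX xbar n j))
    (i : Fin n) :
    ∑ j ∈ Finset.univ.erase i, |flocJF xbar n g μ q kf ka Γ α j i|
      ≤ g (gridX xbar n i) / (xbar / n) + q (gridX xbar n i)
          + (∑ j : Fin n, if (j : ℕ) < (i : ℕ) then
              Γ (gridX xbar n j) (gridX xbar n i) * kf (gridX xbar n i) * (xbar / n)
            else 0)
          + (∑ j : Fin n, if (j : ℕ) + (i : ℕ) + 2 ≤ n then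
              α j * ka (gridX xbar n j) (gridX xbar n i) * (xbar / n) else 0)
          + (∑ j : Fin n, if (j : ℕ) + (i : ℕ) + 2 ≤ n ∧ j ≠ i then
              α j * ka (gridX xbar n i) (gridX xbar n j) * (xbar / n) else 0) := by
  set Δ := xbar / n with hΔdef
  have hΔ : 0 < Δ := by positivity
  set x := gridX xbar n with hxdef
  -- the four bounding functions
  set Gb : Fin n → ℝ := fun j =>
    (if (j : ℕ) = 0 then q (x i) else 0) + (if (j : ℕ) = (i : ℕ) + 1 then g (x i) / Δ else 0)
    with hGb
  set T1 : Fin n → ℝ := fun j =>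
    if (j : ℕ) + (i : ℕ) + 2 ≤ n then α j * ka (x j) (x i) * Δ else 0 with hT1
  set T3 : Fin n → ℝ := fun j =>
    if _h : (i : ℕ) < (j : ℕ) then
      α ⟨(j : ℕ) - (i : ℕ) - 1,
          Nat.lt_of_le_of_lt ((Nat.sub_le _ _).trans (Nat.sub_le _ _)) j.isLt⟩ *
        ka (x i)
          (x ⟨(j : ℕ) - (i : ℕ) - 1,
            Nat.lt_of_le_of_lt ((Nat.sub_le _ _).trans (Nat.sub_le _ _)) j.isLt⟩) * Δ
    else 0 with hT3
  set Bb : Fin n → ℝ := fun j =>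
    if (j : ℕ) < (i : ℕ) then Γ (x j) (x i) * kf (x i) * Δ else 0 with hBb
  -- pointwise bound
  have hpt : ∀ j ∈ Finset.univ.erase i,
      |flocJF xbar n g μ q kf ka Γ α j i| ≤ Gb j + T1 j + T3 j + Bb j := by
    intro j hj
    have hji : j ≠ i := Finset.ne_of_mem_erase hj
    have hentry : flocJF xbar n g μ q kf ka Γ α j i
        = sinkoG xbar n g μ q j i + flocJA xbar n ka α j i + flocJB xbar n kf Γ j i := rfl
    rw [hentry]
    have h1 : |sinkoG xbar n g μ q j i| ≤ Gb j := by
      simp only [sinkoG, if_neg hji, hGb]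
      split_ifs with h0 h2 h2
      · omega
      · rw [abs_of_nonneg (hq i)]; simp
      · rw [abs_of_nonneg (div_nonneg (hg i) hΔ.le)]; simp
      · simp
    have h2 : |flocJA xbar n ka α j i| ≤ T1 j + T3 j := by
      simp only [flocJA, if_neg hji, add_zero, hT1, hT3]
      refine (abs_add_le _ _).trans (add_le_add ?_ ?_)
      · split_ifs with h
        · rw [show -α j * ka (x j) (x i) * Δ = -(α j * ka (x j) (x i) * Δ) by ring, abs_neg,
            abs_of_nonneg (mul_nonneg (mul_nonneg (hα j) (hka j i)) hΔ.le)]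
        · simp
      · split_ifs with h
        · rw [abs_of_nonneg (mul_nonneg (mul_nonneg (hα _) (hka i _)) hΔ.le)]
        · simp
    have h3 : |flocJB xbar n kf Γ j i| ≤ Bb j := by
      simp only [flocJB, if_neg hji, hBb]
      split_ifs with h
      · rw [abs_of_nonneg (mul_nonneg (mul_nonneg (hΓ j i) (hkf i)) hΔ.le)]
      · simp
    calc |sinkoG xbar n g μ q j i + flocJA xbar n ka α j i + flocJB xbar n kf Γ j i|
        ≤ |sinkoG xbar n g μ q j i + flocJA xbar n ka α j i| + |flocJB xbar n kf Γ j i| :=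
          abs_add_le _ _
      _ ≤ |sinkoG xbar n g μ q j i| + |flocJA xbar n ka α j i| + |flocJB xbar n kf Γ j i| :=
          add_le_add_left (abs_add_le _ _) _
      _ ≤ Gb j + (T1 j + T3 j) + Bb j := add_le_add (add_le_add h1 h2) h3
      _ = Gb j + T1 j + T3 j + Bb j := by ring
  have hsum := Finset.sum_le_sum hpt
  refine hsum.trans ?_
  rw [Finset.sum_add_distrib, Finset.sum_add_distrib, Finset.sum_add_distrib]
  -- G part
  have hGsum : ∑ j ∈ Finset.univ.erase i, Gb j ≤ g (x i) / Δ + q (x i) := by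
    have h1 : ∑ j ∈ Finset.univ.erase i, Gb j ≤ ∑ j : Fin n, Gb j := by
      apply Finset.sum_le_sum_of_subset_of_nonneg (Finset.erase_subset _ _)
      intro j _ _
      have : 0 ≤ g (x i) / Δ := div_nonneg (hg i) hΔ.le
      have := hq i
      simp only [hGb]
      split_ifs <;> simp_all
    refine h1.trans ?_
    simp only [hGb]
    rw [Finset.sum_add_distrib]
    have := sum_ite_val_le (n := n) (hq i) 0
    have := sum_ite_val_le (n := n) (c := g (x i) / Δ) (div_nonneg (hg i) hΔ.le) ((i : ℕ) + 1)
    linarith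
  -- JB part
  have hBsum : ∑ j ∈ Finset.univ.erase i, Bb j
      = ∑ j : Fin n, if (j : ℕ) < (i : ℕ) then Γ (x j) (x i) * kf (x i) * Δ else 0 := by
    apply Finset.sum_erase
    simp [hBb]
  -- T1 part
  have hT1sum : ∑ j ∈ Finset.univ.erase i, T1 j
      = (∑ j : Fin n, if (j : ℕ) + (i : ℕ) + 2 ≤ n then α j * ka (x j) (x i) * Δ else 0)
        - (if (i : ℕ) + (i : ℕ) + 2 ≤ n then α i * ka (x i) (x i) * Δ else 0) := by
    have := Finset.sum_erase_add Finset.univ T1 (Finset.mem_univ i)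
    simp only [hT1] at this ⊢
    linarith
  -- T3 part
  have hT3sum : ∑ j ∈ Finset.univ.erase i, T3 j
      = (∑ j : Fin n, if (j : ℕ) + (i : ℕ) + 2 ≤ n ∧ j ≠ i then α j * ka (x i) (x j) * Δ else 0)
        + (if (i : ℕ) + (i : ℕ) + 2 ≤ n then α i * ka (x i) (x i) * Δ else 0) := by
    have e0 : ∑ j ∈ Finset.univ.erase i, T3 j = ∑ j : Fin n, T3 j := by
      apply Finset.sum_erase
      simp [hT3]
    -- reindex
    set F : ℕ → ℝ := fun m =>
      if h : m < n then α ⟨m, h⟩ * ka (x i) (x ⟨m, h⟩) * Δ else 0 with hF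
    have e1 : ∑ j : Fin n, T3 j
        = ∑ j : Fin n, (if (i : ℕ) < (j : ℕ) then F ((j : ℕ) - (i : ℕ) - 1) else 0) := by
      apply Finset.sum_congr rfl
      intro j _
      simp only [hT3, hF]
      split_ifs with h h2
      · rfl
      · exfalso; exact h2 (Nat.lt_of_le_of_lt ((Nat.sub_le _ _).trans (Nat.sub_le _ _)) j.isLt)
      · rfl
    have e2 : ∑ j : Fin n, (if (i : ℕ) < (j : ℕ) then F ((j : ℕ) - (i : ℕ) - 1) else 0)
        = ∑ m : Fin n, (if (m : ℕ) + (i : ℕ) + 2 ≤ n then F (m : ℕ) else 0) :=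
      sum_reindex i F
    have e3 : ∀ m : Fin n, F (m : ℕ) = α m * ka (x i) (x m) * Δ := by
      intro m
      simp only [hF, dif_pos m.isLt, Fin.eta]
    have e4 : ∑ m : Fin n, (if (m : ℕ) + (i : ℕ) + 2 ≤ n then F (m : ℕ) else 0)
        = ∑ m : Fin n, (if (m : ℕ) + (i : ℕ) + 2 ≤ n then α m * ka (x i) (x m) * Δ else 0) := by
      apply Finset.sum_congr rfl
      intro m _
      rw [e3 m]
    -- split off the i term
    have e5 : ∑ m : Fin n, (if (m : ℕ) + (i : ℕ) + 2 ≤ n then α m * ka (x i) (x m) * Δ else 0)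
        = (∑ j : Fin n, if (j : ℕ) + (i : ℕ) + 2 ≤ n ∧ j ≠ i then α j * ka (x i) (x j) * Δ else 0)
          + (if (i : ℕ) + (i : ℕ) + 2 ≤ n then α i * ka (x i) (x i) * Δ else 0) := by
      rw [← Finset.sum_erase_add Finset.univ _ (Finset.mem_univ i)]
      congr 1
      · rw [← Finset.sum_erase (f := fun j : Fin n =>
          if (j : ℕ) + (i : ℕ) + 2 ≤ n ∧ j ≠ i then α j * ka (x i) (x j) * Δ else 0)
          Finset.univ (a := i) (by simp)]
        apply Finset.sum_congr rfl
        intro j hj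
        have hji : j ≠ i := Finset.ne_of_mem_erase hj
        simp [hji]
    rw [e0, e1, e2, e4, e5]
  rw [hBsum, hT1sum, hT3sum]
  linarith

/-- Gershgorin-type localization for the approximate Jacobian `J_F(α)` of the
population balance equation: every complex eigenvalue `λ` of `J_F(α)` lies within
distance `R_i` of some diagonal entry `(J_F(α))_{i,i}`, where
`R_i = g(x_i)/Δx + q(x_i) + Σ_{j<i} Γ(x_j,x_i)k_f(x_i)Δx
  + Σ_{j=1}^{n−i} α_j k_a(x_j,x_i)Δx + Σ_{j=1,j≠i}^{n−i} α_j k_a(x_i,x_j)Δx`. -/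
theorem flocJF_gershgorin
    (xbar : ℝ) (hxbar : 0 < xbar) (n : ℕ) (hn : 1 ≤ n)
    (g μ q kf : ℝ → ℝ) (ka : ℝ → ℝ → ℝ) (Γ : ℝ → ℝ → ℝ) (α : Fin n → ℝ)
    (hα : ∀ i : Fin n, 0 ≤ α i)
    (hg : ∀ i : Fin n, 0 ≤ g (gridX xbar n i))
    (hq : ∀ i : Fin n, 0 ≤ q (gridX xbar n i))
    (hkf : ∀ i : Fin n, 0 ≤ kf (gridX xbar n i))
    (hka : ∀ i j : Fin n, 0 ≤ ka (gridX xbar n i) (gridX xbar n j))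
    (hΓ : ∀ i j : Fin n, 0 ≤ Γ (gridX xbar n i) (gridX xbar n j))
    (lam : ℂ)
    (hlam : lam ∈ spectrum ℂ
      ((flocJF xbar n g μ q kf ka Γ α).map Complex.ofReal)) :
    ∃ i : Fin n,
      ‖lam - ((flocJF xbar n g μ q kf ka Γ α i i : ℝ) : ℂ)‖
        ≤ g (gridX xbar n i) / (xbar / n) + q (gridX xbar n i)
          + (∑ j : Fin n, if (j : ℕ) < (i : ℕ) then
              Γ (gridX xbar n j) (gridX xbar n i) * kf (gridX xbar n i) * (xbar / n)
            else 0)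
          + (∑ j : Fin n, if (j : ℕ) + (i : ℕ) + 2 ≤ n then
              α j * ka (gridX xbar n j) (gridX xbar n i) * (xbar / n) else 0)
          + (∑ j : Fin n, if (j : ℕ) + (i : ℕ) + 2 ≤ n ∧ j ≠ i then
              α j * ka (gridX xbar n i) (gridX xbar n j) * (xbar / n) else 0) := by
  obtain ⟨k, hk⟩ := gersh _ hlam
  refine ⟨k, ?_⟩
  have hnorm : ∀ j : Fin n, ‖((flocJF xbar n g μ q kf ka Γ α).map Complex.ofReal) j k‖
      = |flocJF xbar n g μ q kf ka Γ α j k| := by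
    intro j
    simp [Matrix.map_apply, Complex.norm_real]
  have hdiag : ((flocJF xbar n g μ q kf ka Γ α).map Complex.ofReal) k k
      = ((flocJF xbar n g μ q kf ka Γ α k k : ℝ) : ℂ) := rfl
  rw [hdiag] at hk
  refine hk.trans ?_
  calc ∑ j ∈ Finset.univ.erase k, ‖((flocJF xbar n g μ q kf ka Γ α).map Complex.ofReal) j k‖
      = ∑ j ∈ Finset.univ.erase k, |flocJF xbar n g μ q kf ka Γ α j k| :=
        Finset.sum_congr rfl (fun j _ => hnorm j)
    _ ≤ _ := colsum_le xbar hxbar n hn g μ q kf ka Γ α hα hg hq hkf hka hΓ k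
end

section
/- Assume α_i ≥ 0, g(x_i) ≥ 0, q(x_i) ≥ 0, k_f(x_i) ≥ 0, k_a(x_i, x_j) ≥ 0, and Γ(x_i, x_j) ≥ 0 for all i, j ∈ {1, …, n}. If for every i ∈ {1, …, n} one has μ(x_i) + k_f(x_i)/2 > q(x_i) + Σ_{j=1}^{i−1} Γ(x_j, x_i)·k_f(x_i)·Δx + Σ_{j=1}^{n−i} α_j·k_a(x_j, x_i)·Δx, then every complex eigenvalue of J_F(α) has strictly negative real part. -/
open scoped BigOperators

section FlocAux

open Matrix Finset

private lemma floc_gershgorin_col {n : ℕ} (B : Matrix (Fin n) (Fin n) ℂ) {lam : ℂ}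
    (h : lam ∈ spectrum ℂ B) :
    ∃ k, ‖lam - B k k‖ ≤ ∑ i ∈ Finset.univ.erase k, ‖B i k‖ := by
  have hT : lam ∈ spectrum ℂ Bᵀ := by
    rw [spectrum.mem_iff] at h ⊢
    rw [Matrix.isUnit_iff_isUnit_det] at h ⊢
    have e : algebraMap ℂ (Matrix (Fin n) (Fin n) ℂ) lam - Bᵀ
        = (algebraMap ℂ (Matrix (Fin n) (Fin n) ℂ) lam - B)ᵀ := by
      rw [Matrix.transpose_sub]
      congr 1
      simp [Matrix.algebraMap_eq_diagonal]
    rw [e, Matrix.det_transpose]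
    exact h
  have hE : Module.End.HasEigenvalue (Matrix.toLin' Bᵀ) lam := by
    rw [Module.End.hasEigenvalue_iff_mem_spectrum]
    have e : Matrix.toLin' Bᵀ = Matrix.toLinAlgEquiv' Bᵀ := rfl
    rw [e, AlgEquiv.spectrum_eq Matrix.toLinAlgEquiv']
    exact hT
  obtain ⟨k, hk⟩ := eigenvalue_mem_ball hE
  refine ⟨k, ?_⟩
  rw [Metric.mem_closedBall, dist_eq_norm] at hk
  simpa [Matrix.transpose_apply] using hk

private lemma floc_shift_sum {n k : ℕ} (F : ℕ → ℝ) :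
    (∑ i ∈ Finset.range n, if k < i then F (i - k - 1) else 0)
      = ∑ m ∈ Finset.range n, if m + k + 2 ≤ n then F m else 0 := by
  rw [← Finset.sum_filter, ← Finset.sum_filter]
  have e1 : (Finset.range n).filter (fun i => k < i) = Finset.Ico (k+1) n := by
    ext a; simp only [Finset.mem_filter, Finset.mem_range, Finset.mem_Ico]; omega
  have e2 : (Finset.range n).filter (fun m => m + k + 2 ≤ n)
      = Finset.range (n - (k+1)) := by
    ext a; simp only [Finset.mem_filter, Finset.mem_range]; omega
  rw [e1, e2, Finset.sum_Ico_eq_sum_range]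
  exact Finset.sum_congr rfl fun j _ => by congr 1; omega

private lemma floc_reindex (xbar : ℝ) (n : ℕ) (ka2 : ℝ → ℝ) (α : Fin n → ℝ) (Δx : ℝ)
    (k : Fin n) :
    (∑ i : Fin n, if h : (k : ℕ) < (i : ℕ) then
        α ⟨(i : ℕ) - (k : ℕ) - 1,
            Nat.lt_of_le_of_lt ((Nat.sub_le _ _).trans (Nat.sub_le _ _)) i.isLt⟩ *
          ka2 (gridX xbar n ⟨(i : ℕ) - (k : ℕ) - 1,
            Nat.lt_of_le_of_lt ((Nat.sub_le _ _).trans (Nat.sub_le _ _)) i.isLt⟩) * Δx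
      else 0)
    = ∑ m : Fin n, if (m : ℕ) + (k : ℕ) + 2 ≤ n then ka2 (gridX xbar n m) * α m * Δx
        else 0 := by
  have hL : (∑ i : Fin n, if h : (k : ℕ) < (i : ℕ) then
        α ⟨(i : ℕ) - (k : ℕ) - 1,
            Nat.lt_of_le_of_lt ((Nat.sub_le _ _).trans (Nat.sub_le _ _)) i.isLt⟩ *
          ka2 (gridX xbar n ⟨(i : ℕ) - (k : ℕ) - 1,
            Nat.lt_of_le_of_lt ((Nat.sub_le _ _).trans (Nat.sub_le _ _)) i.isLt⟩) * Δx
      else 0)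
      = ∑ i ∈ Finset.range n, (fun N => if (k : ℕ) < N then
          (fun m => if h : m < n then α ⟨m, h⟩ * ka2 (gridX xbar n ⟨m, h⟩) * Δx else 0)
            (N - (k : ℕ) - 1) else 0) i := by
    rw [← Fin.sum_univ_eq_sum_range]
    refine Finset.sum_congr rfl fun i _ => ?_
    dsimp only
    by_cases h : (k : ℕ) < (i : ℕ)
    · rw [dif_pos h, if_pos h,
        dif_pos (show (i : ℕ) - (k : ℕ) - 1 < n by omega)]
    · rw [dif_neg h, if_neg h]
  have hR : (∑ m : Fin n, if (m : ℕ) + (k : ℕ) + 2 ≤ n then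
        ka2 (gridX xbar n m) * α m * Δx else 0)
      = ∑ m ∈ Finset.range n, (fun N => if N + (k : ℕ) + 2 ≤ n then
          (fun m' => if h : m' < n then α ⟨m', h⟩ * ka2 (gridX xbar n ⟨m', h⟩) * Δx else 0)
            N else 0) m := by
    rw [← Fin.sum_univ_eq_sum_range]
    refine Finset.sum_congr rfl fun m _ => ?_
    dsimp only
    by_cases h : (m : ℕ) + (k : ℕ) + 2 ≤ n
    · rw [if_pos h, if_pos h, dif_pos m.isLt, Fin.eta]
      ring
    · rw [if_neg h, if_neg h]
  rw [hL, hR]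
  exact floc_shift_sum (fun m' => if h : m' < n then α ⟨m', h⟩ * ka2 (gridX xbar n ⟨m', h⟩) * Δx else 0)

private lemma floc_sum_ite_le {n : ℕ} (N : ℕ) (c : ℝ) (hc : 0 ≤ c) :
    (∑ i : Fin n, if (i : ℕ) = N then c else 0) ≤ c := by
  rcases lt_or_ge N n with h | h
  · have e : (fun i : Fin n => if (i : ℕ) = N then c else 0)
        = fun i : Fin n => if i = ⟨N, h⟩ then c else 0 := by
      funext i; simp [Fin.ext_iff]
    rw [e, Finset.sum_ite_eq' Finset.univ (⟨N, h⟩ : Fin n) (fun _ => c)]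
    simp
  · have e : ∀ i : Fin n, (if (i : ℕ) = N then c else 0) = 0 := fun i => by
      rw [if_neg]; omega
    simp only [e, Finset.sum_const_zero]
    exact hc

end FlocAux

private lemma floc_abs_add_four (a b c d : ℝ) : |a+b+c+d| ≤ |a|+|b|+|c|+|d| := by
  calc |a+b+c+d| ≤ |a+b+c| + |d| := abs_add_le _ _
    _ ≤ |a+b| + |c| + |d| := by linarith [abs_add_le (a+b) c]
    _ ≤ |a|+|b|+|c|+|d| := by linarith [abs_add_le a b]

/-- Proposition 2 (finite-dimensional content): under the diagonal-dominance
condition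
`μ(x_i) + k_f(x_i)/2 > q(x_i) + Σ_{j<i} Γ(x_j,x_i)k_f(x_i)Δx + Σ_{j=1}^{n−i} α_j k_a(x_j,x_i)Δx`
at every grid point, every complex eigenvalue of the approximate Jacobian `J_F(α)`
has strictly negative real part. -/
theorem flocJF_eigenvalues_negative
    (xbar : ℝ) (hxbar : 0 < xbar) (n : ℕ) (hn : 1 ≤ n)
    (g μ q kf : ℝ → ℝ) (ka : ℝ → ℝ → ℝ) (Γ : ℝ → ℝ → ℝ) (α : Fin n → ℝ)
    (hα : ∀ i : Fin n, 0 ≤ α i)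
    (hg : ∀ i : Fin n, 0 ≤ g (gridX xbar n i))
    (hq : ∀ i : Fin n, 0 ≤ q (gridX xbar n i))
    (hkf : ∀ i : Fin n, 0 ≤ kf (gridX xbar n i))
    (hka : ∀ i j : Fin n, 0 ≤ ka (gridX xbar n i) (gridX xbar n j))
    (hΓ : ∀ i j : Fin n, 0 ≤ Γ (gridX xbar n i) (gridX xbar n j))
    (hdom : ∀ i : Fin n,
      q (gridX xbar n i)
        + (∑ j : Fin n, if (j : ℕ) < (i : ℕ) then
            Γ (gridX xbar n j) (gridX xbar n i) * kf (gridX xbar n i) * (xbar / n)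
          else 0)
        + (∑ j : Fin n, if (j : ℕ) + (i : ℕ) + 2 ≤ n then
            α j * ka (gridX xbar n j) (gridX xbar n i) * (xbar / n) else 0)
      < μ (gridX xbar n i) + kf (gridX xbar n i) / 2)
    (lam : ℂ)
    (hlam : lam ∈ spectrum ℂ
      ((flocJF xbar n g μ q kf ka Γ α).map Complex.ofReal)) :
    lam.re < 0 := by
  classical
  have hn0 : (0 : ℝ) < n := by exact_mod_cast hn
  have hΔx0 : (0 : ℝ) < xbar / n := div_pos hxbar hn0
  obtain ⟨k, hk⟩ := floc_gershgorin_col _ hlam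
  -- diagonal entry
  have hdiag : flocJF xbar n g μ q kf ka Γ α k k
      = -(g (gridX xbar n k)) / (xbar/n) - μ (gridX xbar n k)
        + (if (k : ℕ) = 0 then q (gridX xbar n k) else 0)
        + (if (k : ℕ) + (k : ℕ) + 2 ≤ n then
            -(α k) * ka (gridX xbar n k) (gridX xbar n k) * (xbar/n) else 0)
        - (∑ m : Fin n, if (m : ℕ) + (k : ℕ) + 2 ≤ n then
            ka (gridX xbar n k) (gridX xbar n m) * α m * (xbar/n) else 0)
        - kf (gridX xbar n k) / 2 := by
    simp only [flocJF, sinkoG, flocJA, flocJB, Matrix.add_apply, if_pos rfl]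
    rw [dif_neg (lt_irrefl (k : ℕ))]
    split_ifs <;> ring
  -- off-diagonal entries
  have hoff : ∀ i : Fin n, i ≠ k → flocJF xbar n g μ q kf ka Γ α i k
      = (if (i : ℕ) = 0 then q (gridX xbar n k)
         else if (i : ℕ) = (k : ℕ) + 1 then g (gridX xbar n k) / (xbar/n) else 0)
        + (if (i : ℕ) + (k : ℕ) + 2 ≤ n then
            -(α i) * ka (gridX xbar n i) (gridX xbar n k) * (xbar/n) else 0)
        + (if h : (k : ℕ) < (i : ℕ) then
            α ⟨(i : ℕ) - (k : ℕ) - 1,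
              Nat.lt_of_le_of_lt ((Nat.sub_le _ _).trans (Nat.sub_le _ _)) i.isLt⟩ *
              ka (gridX xbar n k)
                (gridX xbar n ⟨(i : ℕ) - (k : ℕ) - 1,
                  Nat.lt_of_le_of_lt ((Nat.sub_le _ _).trans (Nat.sub_le _ _)) i.isLt⟩)
              * (xbar/n)
           else 0)
        + (if (i : ℕ) < (k : ℕ) then
            Γ (gridX xbar n i) (gridX xbar n k) * kf (gridX xbar n k) * (xbar/n) else 0) := by
    intro i hik
    simp only [flocJF, sinkoG, flocJA, flocJB, Matrix.add_apply, if_neg hik]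
    ring
  -- from Gershgorin to real bound
  have hre : lam.re - flocJF xbar n g μ q kf ka Γ α k k
      ≤ ∑ i ∈ Finset.univ.erase k, |flocJF xbar n g μ q kf ka Γ α i k| := by
    have h1 : lam.re - flocJF xbar n g μ q kf ka Γ α k k
        ≤ ‖lam - ((flocJF xbar n g μ q kf ka Γ α).map Complex.ofReal) k k‖ := by
      have e : (lam - ((flocJF xbar n g μ q kf ka Γ α).map Complex.ofReal) k k).re
          = lam.re - flocJF xbar n g μ q kf ka Γ α k k := by
        simp [Matrix.map_apply]
      calc lam.re - flocJF xbar n g μ q kf ka Γ α k k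
          = (lam - ((flocJF xbar n g μ q kf ka Γ α).map Complex.ofReal) k k).re := e.symm
        _ ≤ ‖lam - ((flocJF xbar n g μ q kf ka Γ α).map Complex.ofReal) k k‖ :=
            Complex.re_le_norm _
        _ = ‖lam - ((flocJF xbar n g μ q kf ka Γ α).map Complex.ofReal) k k‖ :=
            rfl
    have h2 : (∑ i ∈ Finset.univ.erase k,
          ‖((flocJF xbar n g μ q kf ka Γ α).map Complex.ofReal) i k‖)
        = ∑ i ∈ Finset.univ.erase k, |flocJF xbar n g μ q kf ka Γ α i k| := by
      refine Finset.sum_congr rfl fun i _ => ?_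
      simp [Matrix.map_apply, Complex.norm_real, Real.norm_eq_abs]
    exact h1.trans (hk.trans_eq h2)
  -- pointwise bound on off-diagonal absolute values
  have habs : ∀ i ∈ Finset.univ.erase k, |flocJF xbar n g μ q kf ka Γ α i k|
      ≤ ((if (i : ℕ) = 0 ∧ ¬(k : ℕ) = 0 then q (gridX xbar n k) else 0)
          + (if (i : ℕ) = (k : ℕ) + 1 then g (gridX xbar n k) / (xbar/n) else 0))
        + (if (i : ℕ) + (k : ℕ) + 2 ≤ n then
            α i * ka (gridX xbar n i) (gridX xbar n k) * (xbar/n) else 0)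
        + (if h : (k : ℕ) < (i : ℕ) then
            α ⟨(i : ℕ) - (k : ℕ) - 1,
              Nat.lt_of_le_of_lt ((Nat.sub_le _ _).trans (Nat.sub_le _ _)) i.isLt⟩ *
              ka (gridX xbar n k)
                (gridX xbar n ⟨(i : ℕ) - (k : ℕ) - 1,
                  Nat.lt_of_le_of_lt ((Nat.sub_le _ _).trans (Nat.sub_le _ _)) i.isLt⟩)
              * (xbar/n)
           else 0)
        + (if (i : ℕ) < (k : ℕ) then
            Γ (gridX xbar n i) (gridX xbar n k) * kf (gridX xbar n k) * (xbar/n) else 0) := by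
    intro i hi
    have hik : i ≠ k := Finset.ne_of_mem_erase hi
    rw [hoff i hik]
    refine (floc_abs_add_four _ _ _ _).trans ?_
    refine add_le_add (add_le_add (add_le_add ?_ ?_) ?_) ?_
    · -- |G| ≤ P1
      by_cases h0 : (i : ℕ) = 0
      · have hk0 : ¬(k : ℕ) = 0 := fun h => hik (Fin.ext (by omega))
        rw [if_pos h0, if_pos ⟨h0, hk0⟩, abs_of_nonneg (hq k)]
        have : (0:ℝ) ≤ if (i : ℕ) = (k : ℕ) + 1 then g (gridX xbar n k) / (xbar/n) else 0 := by
          split_ifs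
          · exact div_nonneg (hg k) hΔx0.le
          · exact le_refl 0
        linarith
      · rw [if_neg h0, if_neg (show ¬((i : ℕ) = 0 ∧ ¬(k : ℕ) = 0) from fun hc => h0 hc.1)]
        by_cases h1 : (i : ℕ) = (k : ℕ) + 1
        · rw [if_pos h1, abs_of_nonneg (div_nonneg (hg k) hΔx0.le)]
          linarith
        · rw [if_neg h1]
          simp
    · -- |A1| ≤ P2
      by_cases h2 : (i : ℕ) + (k : ℕ) + 2 ≤ n
      · have e : -(α i) * ka (gridX xbar n i) (gridX xbar n k) * (xbar/n)
            = -(α i * ka (gridX xbar n i) (gridX xbar n k) * (xbar/n)) := by ring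
        rw [if_pos h2, if_pos h2, e, abs_neg,
          abs_of_nonneg (mul_nonneg (mul_nonneg (hα i) (hka i k)) hΔx0.le)]
      · rw [if_neg h2, if_neg h2]
        simp
    · -- |A3| ≤ P3
      by_cases h3 : (k : ℕ) < (i : ℕ)
      · rw [dif_pos h3,
          abs_of_nonneg (mul_nonneg (mul_nonneg (hα _) (hka k _)) hΔx0.le)]
      · rw [dif_neg h3]
        simp
    · -- |B| ≤ P4
      by_cases h4 : (i : ℕ) < (k : ℕ)
      · rw [if_pos h4,
          abs_of_nonneg (mul_nonneg (mul_nonneg (hΓ i k) (hkf k)) hΔx0.le)]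
      · rw [if_neg h4]
        simp
  -- bound the off-diagonal column sum
  have hsum : (∑ i ∈ Finset.univ.erase k, |flocJF xbar n g μ q kf ka Γ α i k|)
      ≤ ((if ¬(k : ℕ) = 0 then q (gridX xbar n k) else 0)
            + g (gridX xbar n k) / (xbar/n))
        + ((∑ j : Fin n, if (j : ℕ) + (k : ℕ) + 2 ≤ n then
              α j * ka (gridX xbar n j) (gridX xbar n k) * (xbar / n) else 0)
            - (if (k : ℕ) + (k : ℕ) + 2 ≤ n then
                α k * ka (gridX xbar n k) (gridX xbar n k) * (xbar/n) else 0))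
        + (∑ m : Fin n, if (m : ℕ) + (k : ℕ) + 2 ≤ n then
            ka (gridX xbar n k) (gridX xbar n m) * α m * (xbar/n) else 0)
        + (∑ j : Fin n, if (j : ℕ) < (k : ℕ) then
            Γ (gridX xbar n j) (gridX xbar n k) * kf (gridX xbar n k) * (xbar / n) else 0) := by
    refine (Finset.sum_le_sum habs).trans ?_
    rw [Finset.sum_add_distrib, Finset.sum_add_distrib, Finset.sum_add_distrib]
    refine add_le_add (add_le_add (add_le_add ?_ ?_) ?_) ?_
    · -- P1 sum
      rw [Finset.sum_add_distrib]
      have s1 : (∑ i ∈ Finset.univ.erase k,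
            if (i : ℕ) = 0 ∧ ¬(k : ℕ) = 0 then q (gridX xbar n k) else 0)
          ≤ (if ¬(k : ℕ) = 0 then q (gridX xbar n k) else 0) := by
        by_cases hk0 : (k : ℕ) = 0
        · simp [hk0]
        · rw [if_pos hk0]
          have e : ∀ i : Fin n,
              (if (i : ℕ) = 0 ∧ ¬(k : ℕ) = 0 then q (gridX xbar n k) else 0)
                = (if (i : ℕ) = 0 then q (gridX xbar n k) else 0) := fun i => by
            simp [hk0]
          calc (∑ i ∈ Finset.univ.erase k,
                if (i : ℕ) = 0 ∧ ¬(k : ℕ) = 0 then q (gridX xbar n k) else 0)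
              ≤ ∑ i : Fin n, if (i : ℕ) = 0 ∧ ¬(k : ℕ) = 0 then q (gridX xbar n k) else 0 :=
                Finset.sum_le_sum_of_subset_of_nonneg (Finset.subset_univ _)
                  (fun i _ _ => by split_ifs; exacts [hq k, le_refl 0])
            _ = ∑ i : Fin n, if (i : ℕ) = 0 then q (gridX xbar n k) else 0 :=
                Finset.sum_congr rfl fun i _ => e i
            _ ≤ q (gridX xbar n k) := floc_sum_ite_le 0 _ (hq k)
      have s2 : (∑ i ∈ Finset.univ.erase k,
            if (i : ℕ) = (k : ℕ) + 1 then g (gridX xbar n k) / (xbar/n) else 0)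
          ≤ g (gridX xbar n k) / (xbar/n) := by
        calc (∑ i ∈ Finset.univ.erase k,
              if (i : ℕ) = (k : ℕ) + 1 then g (gridX xbar n k) / (xbar/n) else 0)
            ≤ ∑ i : Fin n, if (i : ℕ) = (k : ℕ) + 1 then g (gridX xbar n k) / (xbar/n) else 0 :=
              Finset.sum_le_sum_of_subset_of_nonneg (Finset.subset_univ _)
                (fun i _ _ => by split_ifs; exacts [div_nonneg (hg k) hΔx0.le, le_refl 0])
          _ ≤ g (gridX xbar n k) / (xbar/n) :=
              floc_sum_ite_le ((k : ℕ) + 1) _ (div_nonneg (hg k) hΔx0.le)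
      exact add_le_add s1 s2
    · -- P2 sum
      rw [Finset.sum_erase_eq_sub (Finset.mem_univ k)]
    · -- P3 sum
      rw [Finset.sum_erase _ (by rw [dif_neg (lt_irrefl (k : ℕ))])]
      rw [floc_reindex xbar n (ka (gridX xbar n k)) α (xbar/n) k]
    · -- P4 sum
      rw [Finset.sum_erase _ (by rw [if_neg (lt_irrefl (k : ℕ))])]
  -- conclude
  have hdomk := hdom k
  have hAA : (if (k : ℕ) = 0 then q (gridX xbar n k) else 0)
      + (if ¬(k : ℕ) = 0 then q (gridX xbar n k) else 0) = q (gridX xbar n k) := by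
    split_ifs with h h2 h3 <;> simp_all
  have hDD : (if (k : ℕ) + (k : ℕ) + 2 ≤ n then
        -(α k) * ka (gridX xbar n k) (gridX xbar n k) * (xbar/n) else 0)
      = -(if (k : ℕ) + (k : ℕ) + 2 ≤ n then
          α k * ka (gridX xbar n k) (gridX xbar n k) * (xbar/n) else 0) := by
    split_ifs <;> ring
  have hgg : -(g (gridX xbar n k)) / (xbar/n) = -(g (gridX xbar n k) / (xbar/n)) :=
    neg_div _ _
  have hDpos : (0:ℝ) ≤ (if (k : ℕ) + (k : ℕ) + 2 ≤ n then
      α k * ka (gridX xbar n k) (gridX xbar n k) * (xbar/n) else 0) := by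
    split_ifs
    · exact mul_nonneg (mul_nonneg (hα k) (hka k k)) hΔx0.le
    · exact le_refl 0
  rw [hdiag] at hre
  linarith [hre, hsum, hdomk, hAA, hDD, hgg, hDpos]
end

section
/- Let x̄ > 0 and let u_* : ℝ → ℝ, k_f, q, μ : ℝ → ℝ, k_a : ℝ × ℝ → ℝ, Γ : ℝ × ℝ → ℝ be functions such that u_* is nonnegative on [0, x̄], k_f, Γ, and k_a are nonnegative on the relevant ranges, and k_a is symmetric (k_a(x, y) = k_a(y, x) for all x, y). Suppose that for every x ∈ [0, x̄]: the map y ↦ Γ(y, x) is antitone and integrable on [0, x]; the map y ↦ k_a(x, y)·u_*(y) is antitone and integrable on [0, x̄ − x]; and the strict inequality μ(x) + k_f(x)/2 > q(x) + k_f(x)·∫_0^x Γ(y, x) dy + ∫_0^{x̄−x} k_a(x, y)·u_*(y) dy holds. Then for every integer n ≥ 1, setting Δx = x̄/n, x_i = i·Δx, and α_j = u_*(x_j), the discrete inequality μ(x_i) + k_f(x_i)/2 > q(x_i) + Σ_{j=1}^{i−1} Γ(x_j, x_i)·k_f(x_i)·Δx + Σ_{j=1}^{n−i} α_j·k_a(x_j,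 x_i)·Δx holds for every i ∈ {1, …, n}. -/
open MeasureTheory intervalIntegral
open scoped BigOperators

lemma sum_le_integral_scaled (f : ℝ → ℝ) (Δ : ℝ) (hΔ : 0 < Δ) (m : ℕ)
    (hf : AntitoneOn f (Set.Icc 0 ((m : ℝ) * Δ))) :
    ∑ j ∈ Finset.range m, f (((j : ℝ) + 1) * Δ) * Δ ≤ ∫ y in (0:ℝ)..((m:ℝ) * Δ), f y := by
  set g : ℝ → ℝ := fun t => f (t * Δ) with hg
  have hganti : AntitoneOn g (Set.Icc (0:ℝ) (0 + (m:ℕ))) := by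
    intro a ha b hb hab
    have ha' : a * Δ ∈ Set.Icc 0 ((m:ℝ) * Δ) := by
      constructor
      · exact mul_nonneg ha.1 hΔ.le
      · have := ha.2; simp at this; nlinarith
    have hb' : b * Δ ∈ Set.Icc 0 ((m:ℝ) * Δ) := by
      constructor
      · exact mul_nonneg hb.1 hΔ.le
      · have := hb.2; simp at this; nlinarith
    exact hf ha' hb' (by nlinarith)
  have key := AntitoneOn.sum_le_integral (x₀ := 0) (a := m) (f := g) hganti
  have hInt : ∫ x in (0:ℝ)..(0 + (m:ℕ) : ℝ), g x = Δ⁻¹ * ∫ y in (0:ℝ)..((m:ℝ) * Δ), f y := by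
    rw [hg, intervalIntegral.integral_comp_mul_right f hΔ.ne']
    simp [smul_eq_mul]
  have hsum : (∑ i ∈ Finset.range m, g (0 + (i + 1 : ℕ))) =
      ∑ j ∈ Finset.range m, f (((j : ℝ) + 1) * Δ) := by
    apply Finset.sum_congr rfl
    intro j _
    simp [hg]
  rw [hInt, hsum] at key
  calc ∑ j ∈ Finset.range m, f (((j : ℝ) + 1) * Δ) * Δ
      = (∑ j ∈ Finset.range m, f (((j : ℝ) + 1) * Δ)) * Δ := by rw [Finset.sum_mul]
    _ ≤ (Δ⁻¹ * ∫ y in (0:ℝ)..((m:ℝ) * Δ), f y) * Δ := by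
        exact mul_le_mul_of_nonneg_right key hΔ.le
    _ = ∫ y in (0:ℝ)..((m:ℝ) * Δ), f y := by field_simp

lemma sum_le_integral_scaled' (f : ℝ → ℝ) (Δ : ℝ) (hΔ : 0 < Δ) (m M : ℕ) (hmM : m ≤ M)
    (hf : AntitoneOn f (Set.Icc 0 ((M : ℝ) * Δ)))
    (hnn : ∀ y ∈ Set.Icc (0:ℝ) ((M:ℝ) * Δ), 0 ≤ f y)
    (hint : IntervalIntegrable f volume 0 ((M:ℝ) * Δ)) :
    ∑ j ∈ Finset.range m, f (((j : ℝ) + 1) * Δ) * Δ ≤ ∫ y in (0:ℝ)..((M:ℝ) * Δ), f y := by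
  have hmM' : (m : ℝ) * Δ ≤ (M : ℝ) * Δ := by
    have : (m:ℝ) ≤ M := Nat.cast_le.2 hmM
    nlinarith
  have h1 := sum_le_integral_scaled f Δ hΔ m (hf.mono (Set.Icc_subset_Icc le_rfl hmM'))
  refine h1.trans ?_
  apply intervalIntegral.integral_mono_interval le_rfl (by positivity) hmM' ?_ hint
  filter_upwards [MeasureTheory.ae_restrict_mem measurableSet_Ioc] with y hy
  exact hnn y ⟨hy.1.le, hy.2⟩

lemma sum_range_cond {g : ℕ → ℝ} {N m : ℕ} (P : ℕ → Prop) [DecidablePred P]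
    (h : ∀ k < N, (P k ↔ k < m)) (hm : m ≤ N) :
    ∑ k ∈ Finset.range N, (if P k then g k else 0) = ∑ k ∈ Finset.range m, g k := by
  rw [← Finset.sum_filter]
  congr 1
  ext k
  simp only [Finset.mem_filter, Finset.mem_range]
  constructor
  · rintro ⟨hk, hP⟩; exact (h k hk).1 hP
  · intro hk; exact ⟨lt_of_lt_of_le hk hm, (h k (lt_of_lt_of_le hk hm)).2 hk⟩

/-- Riemann-sum comparison step of Proposition 2: if the integrands are antitone and
nonnegative and the continuous stability inequality
`μ(x) + k_f(x)/2 > q(x) + k_f(x)·∫_0^x Γ(y,x) dy + ∫_0^{x̄−x} k_a(x,y)u_*(y) dy`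
holds for every `x ∈ [0, x̄]`, then the discrete diagonal-dominance inequality holds
at every grid point, for every discretization level `n`. -/
theorem continuous_implies_discrete_dominance
    (xbar : ℝ) (hxbar : 0 < xbar)
    (u μ q kf : ℝ → ℝ) (ka : ℝ → ℝ → ℝ) (Γ : ℝ → ℝ → ℝ)
    (hu : ∀ x ∈ Set.Icc (0:ℝ) xbar, 0 ≤ u x)
    (hkf : ∀ x ∈ Set.Icc (0:ℝ) xbar, 0 ≤ kf x)
    (hΓnn : ∀ x ∈ Set.Icc (0:ℝ) xbar, ∀ y ∈ Set.Icc (0:ℝ) xbar, 0 ≤ Γ x y)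
    (hkann : ∀ x ∈ Set.Icc (0:ℝ) xbar, ∀ y ∈ Set.Icc (0:ℝ) xbar, 0 ≤ ka x y)
    (hsym : ∀ x y : ℝ, ka x y = ka y x)
    (hΓanti : ∀ x ∈ Set.Icc (0:ℝ) xbar, AntitoneOn (fun y => Γ y x) (Set.Icc 0 x))
    (hΓint : ∀ x ∈ Set.Icc (0:ℝ) xbar,
      IntervalIntegrable (fun y => Γ y x) volume 0 x)
    (hkaanti : ∀ x ∈ Set.Icc (0:ℝ) xbar,
      AntitoneOn (fun y => ka x y * u y) (Set.Icc 0 (xbar - x)))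
    (hkaint : ∀ x ∈ Set.Icc (0:ℝ) xbar,
      IntervalIntegrable (fun y => ka x y * u y) volume 0 (xbar - x))
    (hineq : ∀ x ∈ Set.Icc (0:ℝ) xbar,
      q x + kf x * (∫ y in (0:ℝ)..x, Γ y x)
        + (∫ y in (0:ℝ)..(xbar - x), ka x y * u y)
      < μ x + kf x / 2) :
    ∀ n : ℕ, 1 ≤ n → ∀ i : Fin n,
      q (gridX xbar n i)
        + (∑ j : Fin n, if (j : ℕ) < (i : ℕ) then
            Γ (gridX xbar n j) (gridX xbar n i) * kf (gridX xbar n i) * (xbar / n)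
          else 0)
        + (∑ j : Fin n, if (j : ℕ) + (i : ℕ) + 2 ≤ n then
            u (gridX xbar n j) * ka (gridX xbar n j) (gridX xbar n i) * (xbar / n)
          else 0)
      < μ (gridX xbar n i) + kf (gridX xbar n i) / 2 := by
  intro n hn i
  have hn0 : (0:ℝ) < n := by exact_mod_cast Nat.lt_of_lt_of_le Nat.zero_lt_one hn
  set Δ : ℝ := xbar / n with hΔdef
  have hΔ : 0 < Δ := div_pos hxbar hn0
  have hxbarΔ : xbar = (n:ℝ) * Δ := by rw [hΔdef, mul_div_assoc', mul_comm, mul_div_assoc, div_self hn0.ne', mul_one]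
  set xi : ℝ := gridX xbar n i with hxidef
  have hi_lt : (i:ℕ) < n := i.isLt
  have hxi_eq : xi = (((i:ℕ):ℝ) + 1) * Δ := by
    simp [hxidef, gridX, hΔdef]
  have hi1n : ((i:ℕ):ℝ) + 1 ≤ (n:ℝ) := by exact_mod_cast hi_lt
  have hxi_mem : xi ∈ Set.Icc 0 xbar := by
    rw [hxi_eq]
    constructor
    · positivity
    · rw [hxbarΔ]; nlinarith
  have hxi_M : xi = (((i:ℕ)+1 : ℕ):ℝ) * Δ := by rw [hxi_eq]; push_cast; ring
  have hgrid : ∀ j : Fin n, gridX xbar n j = (((j:ℕ)+1 : ℕ):ℝ) * Δ := fun j => by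
    simp [gridX, hΔdef]
  -- first sum
  have hsum1 : (∑ j : Fin n, if (j : ℕ) < (i : ℕ) then
        Γ (gridX xbar n j) (gridX xbar n i) * kf (gridX xbar n i) * (xbar / n) else 0)
      = ∑ k ∈ Finset.range (i:ℕ),
          Γ ((((k:ℕ)+1 : ℕ):ℝ) * Δ) xi * kf xi * Δ := by
    simp only [hgrid, ← hxi_M]
    rw [Fin.sum_univ_eq_sum_range (fun k =>
      if k < (i:ℕ) then Γ ((((k:ℕ)+1 : ℕ):ℝ) * Δ) xi * kf xi * Δ else 0) n]
    exact sum_range_cond _ (fun k _ => Iff.rfl) hi_lt.le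
  -- second sum
  set m2 : ℕ := n - (i:ℕ) - 1 with hm2
  have hsum2 : (∑ j : Fin n, if (j : ℕ) + (i : ℕ) + 2 ≤ n then
        u (gridX xbar n j) * ka (gridX xbar n j) (gridX xbar n i) * (xbar / n) else 0)
      = ∑ k ∈ Finset.range m2,
          u ((((k:ℕ)+1 : ℕ):ℝ) * Δ) * ka ((((k:ℕ)+1 : ℕ):ℝ) * Δ) xi * Δ := by
    simp only [hgrid, ← hxi_M]
    rw [Fin.sum_univ_eq_sum_range (fun k =>
      if k + (i:ℕ) + 2 ≤ n then u ((((k:ℕ)+1 : ℕ):ℝ) * Δ) * ka ((((k:ℕ)+1 : ℕ):ℝ) * Δ) xi * Δ else 0) n]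
    exact sum_range_cond _ (fun k _ => by omega) (by omega)
  -- bound the first sum
  have hbound1 : (∑ k ∈ Finset.range (i:ℕ), Γ ((((k:ℕ)+1 : ℕ):ℝ) * Δ) xi * kf xi * Δ)
      ≤ kf xi * ∫ y in (0:ℝ)..xi, Γ y xi := by
    have hf : AntitoneOn (fun y => Γ y xi) (Set.Icc 0 ((((i:ℕ)+1 : ℕ):ℝ) * Δ)) := by
      rw [← hxi_M]; exact hΓanti xi hxi_mem
    have hnn : ∀ y ∈ Set.Icc (0:ℝ) ((((i:ℕ)+1 : ℕ):ℝ) * Δ), 0 ≤ Γ y xi := by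
      intro y hy
      rw [← hxi_M] at hy
      exact hΓnn y ⟨hy.1, le_trans hy.2 hxi_mem.2⟩ xi hxi_mem
    have hint : IntervalIntegrable (fun y => Γ y xi) volume 0 ((((i:ℕ)+1 : ℕ):ℝ) * Δ) := by
      rw [← hxi_M]; exact hΓint xi hxi_mem
    have key := sum_le_integral_scaled' (fun y => Γ y xi) Δ hΔ (i:ℕ) ((i:ℕ)+1)
      (Nat.le_succ _) hf hnn hint
    rw [← hxi_M] at key
    calc (∑ k ∈ Finset.range (i:ℕ), Γ ((((k:ℕ)+1 : ℕ):ℝ) * Δ) xi * kf xi * Δ)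
        = kf xi * ∑ k ∈ Finset.range (i:ℕ), Γ (((k:ℝ)+1) * Δ) xi * Δ := by
          rw [Finset.mul_sum]; apply Finset.sum_congr rfl; intro k _; push_cast; ring
      _ ≤ kf xi * ∫ y in (0:ℝ)..xi, Γ y xi := by
          exact mul_le_mul_of_nonneg_left key (hkf xi hxi_mem)
  -- bound the second sum
  have hm2Δ : xbar - xi = ((m2:ℕ):ℝ) * Δ := by
    have : ((m2:ℕ):ℝ) = (n:ℝ) - ((i:ℕ):ℝ) - 1 := by
      rw [hm2]; push_cast [Nat.sub_sub]; push_cast [Nat.cast_sub (by omega : (i:ℕ)+1 ≤ n)]; ring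
    rw [this, hxbarΔ, hxi_eq]; ring
  have hbound2 : (∑ k ∈ Finset.range m2,
        u ((((k:ℕ)+1 : ℕ):ℝ) * Δ) * ka ((((k:ℕ)+1 : ℕ):ℝ) * Δ) xi * Δ)
      ≤ ∫ y in (0:ℝ)..(xbar - xi), ka xi y * u y := by
    have hf : AntitoneOn (fun y => ka xi y * u y) (Set.Icc 0 (((m2:ℕ):ℝ) * Δ)) := by
      rw [← hm2Δ]; exact hkaanti xi hxi_mem
    have hnn : ∀ y ∈ Set.Icc (0:ℝ) (((m2:ℕ):ℝ) * Δ), 0 ≤ ka xi y * u y := by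
      intro y hy
      rw [← hm2Δ] at hy
      have hy' : y ∈ Set.Icc (0:ℝ) xbar := ⟨hy.1, le_trans hy.2 (by linarith [hxi_mem.1])⟩
      exact mul_nonneg (hkann xi hxi_mem y hy') (hu y hy')
    have hint : IntervalIntegrable (fun y => ka xi y * u y) volume 0 (((m2:ℕ):ℝ) * Δ) := by
      rw [← hm2Δ]; exact hkaint xi hxi_mem
    have key := sum_le_integral_scaled' (fun y => ka xi y * u y) Δ hΔ m2 m2 le_rfl hf hnn hint
    rw [← hm2Δ] at key
    refine le_trans (le_of_eq ?_) key
    apply Finset.sum_congr rfl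
    intro k _
    push_cast
    rw [hsym]
    ring
  have hmain := hineq xi hxi_mem
  rw [hsum1, hsum2]
  linarith
end

section
/- Assume k_a is symmetric: k_a(x, y) = k_a(y, x) for all x, y ∈ ℝ. Then the map F_n : ℝ^n → ℝ^n is differentiable, and for every α ∈ ℝ^n its Fréchet derivative at α is the linear map ℝ^n → ℝ^n given by the matrix J_F(α) = G_n + J_A(α) + J_B. -/
open scoped BigOperators

/-- The discretized population balance (microbial flocculation) operator
`F_n : ℝ^n → ℝ^n` (eqs. (19)–(20)): in 1-based notation,
`(F_n(α))_i = (G_n α)_i + (1/2)Σ_{j=1}^{i−1} k_a(x_j,x_{i−j})α_j α_{i−j} Δx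
  − α_i Σ_{j=1}^{n−i} k_a(x_i,x_j)α_j Δx + Σ_{j=i+1}^{n} Γ(x_i,x_j)k_f(x_j)α_j Δx
  − (1/2)k_f(x_i)α_i`. -/
noncomputable def flocF (xbar : ℝ) (n : ℕ) (g μ q kf : ℝ → ℝ)
    (ka : ℝ → ℝ → ℝ) (Γ : ℝ → ℝ → ℝ) (α : Fin n → ℝ) : Fin n → ℝ :=
  fun i =>
    let Δx := xbar / n
    let x := gridX xbar n
    (sinkoG xbar n g μ q).mulVec α i
    + (1 / 2) * (∑ j : Fin n, if _h : (j : ℕ) < (i : ℕ) then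
        ka (x j)
            (x ⟨(i : ℕ) - (j : ℕ) - 1,
              Nat.lt_of_le_of_lt ((Nat.sub_le _ _).trans (Nat.sub_le _ _)) i.isLt⟩)
          * α j
          * α ⟨(i : ℕ) - (j : ℕ) - 1,
              Nat.lt_of_le_of_lt ((Nat.sub_le _ _).trans (Nat.sub_le _ _)) i.isLt⟩
          * Δx
      else 0)
    - α i * (∑ j : Fin n, if (j : ℕ) + (i : ℕ) + 2 ≤ n then
        ka (x i) (x j) * α j * Δx else 0)
    + (∑ j : Fin n, if (i : ℕ) < (j : ℕ) then
        Γ (x i) (x j) * kf (x j) * α j * Δx else 0)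
    - (1 / 2) * kf (x i) * α i


section flocAux

/-- index `i-j-1` as an element of `Fin n` (junk if `j ≥ i`). -/
def fsub {n : ℕ} (i j : Fin n) : Fin n :=
  ⟨(i : ℕ) - (j : ℕ) - 1, Nat.lt_of_le_of_lt ((Nat.sub_le _ _).trans (Nat.sub_le _ _)) i.isLt⟩

noncomputable def flocC (xbar : ℝ) (n : ℕ) (ka : ℝ → ℝ → ℝ) (i j k : Fin n) : ℝ :=
  (if (j:ℕ) < (i:ℕ) then
     (if k = fsub i j then ka (gridX xbar n j) (gridX xbar n k) * (xbar/n) / 2 else 0) else 0)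
  + (if j = i then
     (if (k:ℕ) + (i:ℕ) + 2 ≤ n then -(ka (gridX xbar n i) (gridX xbar n k) * (xbar/n)) else 0) else 0)

noncomputable def flocD (xbar : ℝ) (n : ℕ) (g μ q kf : ℝ → ℝ) (Γ : ℝ → ℝ → ℝ)
    (i j : Fin n) : ℝ :=
  sinkoG xbar n g μ q i j + flocJB xbar n kf Γ i j

lemma quadAux_hasFDerivAt {n : ℕ} (c : Fin n → Fin n → Fin n → ℝ) (d : Fin n → Fin n → ℝ)
    (α : Fin n → ℝ) :
    HasFDerivAt
      (fun a : Fin n → ℝ => fun i => (∑ j, ∑ k, c i j k * (a j * a k)) + ∑ j, d i j * a j)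
      (LinearMap.toContinuousLinearMap
        (Matrix.mulVecLin
          ((fun i j => (∑ k, (c i j k + c i k j) * α k) + d i j) : Matrix (Fin n) (Fin n) ℝ))) α := by
  rw [hasFDerivAt_pi']
  intro i
  have h1 : HasFDerivAt
      (fun a : Fin n → ℝ => (∑ j, ∑ k, c i j k * (a j * a k)) + ∑ j, d i j * a j)
      ((∑ j : Fin n, ∑ k : Fin n, c i j k •
          (α j • (ContinuousLinearMap.proj k : (Fin n → ℝ) →L[ℝ] ℝ)
            + α k • (ContinuousLinearMap.proj j : (Fin n → ℝ) →L[ℝ] ℝ)))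
        + ∑ j : Fin n, d i j • (ContinuousLinearMap.proj j : (Fin n → ℝ) →L[ℝ] ℝ)) α := by
    refine HasFDerivAt.add ?_ ?_
    · exact HasFDerivAt.fun_sum fun j _ => HasFDerivAt.fun_sum fun k _ =>
        ((hasFDerivAt_apply j α).mul (hasFDerivAt_apply k α)).const_mul (c i j k)
    · exact HasFDerivAt.fun_sum fun j _ => (hasFDerivAt_apply j α).const_mul (d i j)
  refine h1.congr_fderiv (Eq.symm ?_)
  ext h
  simp only [ContinuousLinearMap.coe_comp', Function.comp_apply,
    LinearMap.coe_toContinuousLinearMap', Matrix.mulVecLin_apply, Matrix.mulVec,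
    dotProduct, ContinuousLinearMap.proj_apply, ContinuousLinearMap.add_apply,
    ContinuousLinearMap.coe_sum', Finset.sum_apply, ContinuousLinearMap.coe_smul',
    Pi.smul_apply, smul_eq_mul]
  have key : ∑ j : Fin n, ∑ k : Fin n, c i j k * (α j * h k)
      = ∑ j : Fin n, ∑ k : Fin n, c i k j * (α k * h j) := Finset.sum_comm
  simp only [add_mul, mul_add, Finset.sum_add_distrib, Finset.sum_mul]
  rw [key]
  ring_nf
  erw [Matrix.mulVecLin_apply]
  simp only [Matrix.mulVec, dotProduct, add_mul, Finset.sum_add_distrib, Finset.sum_mul]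
  ring_nf
  simp only [mul_comm, mul_left_comm, mul_assoc, add_comm, add_left_comm, add_assoc]

lemma sumC1 (xbar : ℝ) (n : ℕ) (ka : ℝ → ℝ → ℝ) (i j : Fin n) (α : Fin n → ℝ) :
    ∑ k, flocC xbar n ka i j k * α k
      = (if (j:ℕ) < (i:ℕ) then
          ka (gridX xbar n j) (gridX xbar n (fsub i j)) * (xbar/n) / 2 * α (fsub i j) else 0)
        + (if j = i then
            -(∑ m : Fin n, if (m:ℕ)+(i:ℕ)+2 ≤ n then
                ka (gridX xbar n i) (gridX xbar n m) * α m * (xbar/n) else 0) else 0) := by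
  simp only [flocC, add_mul, ite_mul, zero_mul, Finset.sum_add_distrib]
  congr 1
  · by_cases h : (j:ℕ) < (i:ℕ)
    · simp [h, Finset.sum_ite_eq']
    · simp [h]
  · by_cases h : j = i
    · simp only [h, if_true]
      rw [← Finset.sum_neg_distrib]
      exact Finset.sum_congr rfl fun m _ => by split <;> ring
    · simp [h]

lemma sumC2 (xbar : ℝ) (n : ℕ) (ka : ℝ → ℝ → ℝ) (i j : Fin n) (α : Fin n → ℝ) :
    ∑ k, flocC xbar n ka i k j * α k
      = (if (j:ℕ) < (i:ℕ) then
          ka (gridX xbar n (fsub i j)) (gridX xbar n j) * (xbar/n) / 2 * α (fsub i j) else 0)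
        + (if (j:ℕ)+(i:ℕ)+2 ≤ n then
            -(ka (gridX xbar n i) (gridX xbar n j) * (xbar/n)) * α i else 0) := by
  simp only [flocC, add_mul, ite_mul, zero_mul, Finset.sum_add_distrib]
  congr 1
  · have hc : ∀ k : Fin n,
        (if (k:ℕ) < (i:ℕ) then
            (if j = fsub i k then ka (gridX xbar n k) (gridX xbar n j) * (xbar/n) / 2 * α k else 0)
          else 0)
        = (if (j:ℕ) < (i:ℕ) then
            (if k = fsub i j then ka (gridX xbar n k) (gridX xbar n j) * (xbar/n) / 2 * α k else 0)
          else 0) := by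
      intro k
      simp only [fsub, Fin.ext_iff]
      split_ifs <;> first | rfl | (exfalso; omega)
    simp only [hc]
    by_cases h : (j:ℕ) < (i:ℕ)
    · simp [h, Finset.sum_ite_eq']
    · simp [h]
  · have hc : ∀ k : Fin n,
        (if k = i then
            (if (j:ℕ)+(i:ℕ)+2 ≤ n then
              -(ka (gridX xbar n i) (gridX xbar n j) * (xbar/n)) * α k else 0)
          else 0)
        = (if k = i then
            (if (j:ℕ)+(i:ℕ)+2 ≤ n then
              -(ka (gridX xbar n i) (gridX xbar n j) * (xbar/n)) * α i else 0)
          else 0) := by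
      intro k
      split_ifs with h1 <;> first | (subst h1; rfl) | rfl
    simp only [hc]
    rw [Finset.sum_ite_eq']
    simp

lemma flocJB_mul (xbar : ℝ) (n : ℕ) (kf : ℝ → ℝ) (Γ : ℝ → ℝ → ℝ) (i : Fin n) (a : Fin n → ℝ) :
    ∀ j : Fin n, flocJB xbar n kf Γ i j * a j
      = (if j = i then -(kf (gridX xbar n i)) / 2 * a i else 0)
        + (if (i:ℕ) < (j:ℕ) then
            Γ (gridX xbar n i) (gridX xbar n j) * kf (gridX xbar n j) * a j * (xbar/n) else 0) := by
  intro j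
  simp only [flocJB]
  by_cases h1 : i = j
  · subst h1
    simp [lt_irrefl]
  · have h1' : ¬ j = i := fun h => h1 h.symm
    simp only [if_neg h1, if_neg h1']
    by_cases h2 : (i:ℕ) < (j:ℕ) <;> simp [h2] <;> ring

lemma flocF_eq (xbar : ℝ) (n : ℕ) (g μ q kf : ℝ → ℝ) (ka Γ : ℝ → ℝ → ℝ) :
    flocF xbar n g μ q kf ka Γ
      = fun a i => (∑ j, ∑ k, flocC xbar n ka i j k * (a j * a k))
          + ∑ j, flocD xbar n g μ q kf Γ i j * a j := by
  funext a i
  have hq : ∀ j : Fin n, ∑ k, flocC xbar n ka i j k * (a j * a k)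
      = a j * ∑ k, flocC xbar n ka i j k * a k := fun j => by
    rw [Finset.mul_sum]; exact Finset.sum_congr rfl fun k _ => by ring
  simp only [hq, sumC1, flocD, add_mul, Finset.sum_add_distrib, flocJB_mul,
    mul_add, mul_ite, mul_zero, mul_neg]
  rw [Finset.sum_ite_eq', Finset.sum_ite_eq']
  simp only [Finset.mem_univ, if_true, flocF, Matrix.mulVec, dotProduct]
  have hhalf : (1/2 : ℝ) * (∑ j : Fin n, if _h : (j:ℕ) < (i:ℕ) then
        ka (gridX xbar n j) (gridX xbar n (fsub i j)) * a j * a (fsub i j) * (xbar/n) else 0)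
      = ∑ j : Fin n, if (j:ℕ) < (i:ℕ) then
          a j * (ka (gridX xbar n j) (gridX xbar n (fsub i j)) * (xbar/n) / 2 * a (fsub i j))
        else 0 := by
    rw [Finset.mul_sum]
    exact Finset.sum_congr rfl fun j _ => by split <;> ring
  simp only [fsub] at hhalf ⊢
  rw [hhalf]
  ring

lemma flocM_eq (xbar : ℝ) (n : ℕ) (g μ q kf : ℝ → ℝ) (ka Γ : ℝ → ℝ → ℝ)
    (hsym : ∀ x y : ℝ, ka x y = ka y x) (α : Fin n → ℝ) :
    ((fun i j => (∑ k, (flocC xbar n ka i j k + flocC xbar n ka i k j) * α k)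
        + flocD xbar n g μ q kf Γ i j) : Matrix (Fin n) (Fin n) ℝ)
      = flocJF xbar n g μ q kf ka Γ α := by
  funext i j
  show _ = (sinkoG xbar n g μ q + flocJA xbar n ka α + flocJB xbar n kf Γ) i j
  simp only [Matrix.add_apply, flocD, add_mul, Finset.sum_add_distrib, sumC1, sumC2, flocJA]
  rw [hsym (gridX xbar n (fsub i j)) (gridX xbar n j)]
  have hcomm : ((j:ℕ) + (i:ℕ) + 2 ≤ n) = ((i:ℕ) + (j:ℕ) + 2 ≤ n) := by
    rw [Nat.add_comm (j:ℕ) (i:ℕ)]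
  simp only [hcomm]
  by_cases hij : j = i
  · subst hij
    simp only [if_pos rfl, fsub]
    split_ifs <;> ring
  · have hij' : ¬ i = j := fun h => hij h.symm
    simp only [if_neg hij, if_neg hij', fsub]
    split_ifs <;> ring

end flocAux

/-- If the aggregation kernel is symmetric, then the discretized population balance
operator `F_n` is differentiable, and its Fréchet derivative at every `α ∈ ℝ^n` is
the linear map given by the matrix `J_F(α) = G_n + J_A(α) + J_B`. -/
theorem flocF_hasFDerivAt
    (xbar : ℝ) (hxbar : 0 < xbar) (n : ℕ) (hn : 1 ≤ n)
    (g μ q kf : ℝ → ℝ) (ka : ℝ → ℝ → ℝ) (Γ : ℝ → ℝ → ℝ)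
    (hsym : ∀ x y : ℝ, ka x y = ka y x) :
    ∀ α : Fin n → ℝ,
      HasFDerivAt (flocF xbar n g μ q kf ka Γ)
        (LinearMap.toContinuousLinearMap
          (flocJF xbar n g μ q kf ka Γ α).mulVecLin) α := by
  intro α
  have h := quadAux_hasFDerivAt (flocC xbar n ka) (flocD xbar n g μ q kf Γ) α
  rw [flocM_eq xbar n g μ q kf ka Γ hsym α] at h
  rw [flocF_eq xbar n g μ q kf ka Γ]
  exact h
end
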